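/- Let (A, m) be a Noetherian local ring and let 0 → M_h → M_{h-1} → ⋯ → M_1 → M_0 be a complex of finitely generated A-modules (M_i sitting in homological degree i) such that depth_A(M_i) ≥ i for every 0 ≤ i ≤ h. If for every i ≥ 1 the homology module H_i of the complex is either zero or has depth 0 over A, then H_i = 0 for all i ≥ 1, i.e., the complex is exact in all positive degrees. -/

import Mathlib

open CategoryTheory

/-- The depth of a module `M` over a local ring `A`: the maximal length of an
`M`-regular sequence consisting of elements of the maximal ideal of `A`.  (Here we use
weakly regular sequences; over a Noetherian local ring this agrees with the usual depth
for finitely generated modules, and gives the zero module infinite depth, in accordance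
with the usual convention.) -/
noncomputable def moduleDepth (A M : Type*) [CommRing A] [IsLocalRing A]
    [AddCommGroup M] [Module A M] : ℕ∞ :=
  sSup {n : ℕ∞ | ∃ rs : List A, (rs.length : ℕ∞) = n ∧
    (∀ r ∈ rs, r ∈ IsLocalRing.maximalIdeal A) ∧ RingTheory.Sequence.IsWeaklyRegular M rs}

open RingTheory.Sequence Submodule IsLocalRing Pointwise

variable {R : Type*} [CommRing R] {M : Type*} [AddCommGroup M] [Module R M]

lemma mem_colon_bot_singleton_iff' {b : R} {x : M} :
    b ∈ (⊥ : Submodule R M).colon {x} ↔ b • x = 0 := by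
  rw [Submodule.mem_colon_singleton, Submodule.mem_bot]

/-- An associated prime of `M` is an associated prime of `N` or of `M/N`. -/
lemma isAssociatedPrime_sub_or_quot [IsNoetherianRing R] {p : Ideal R} (hp : IsAssociatedPrime p M)
    (N : Submodule R M) : IsAssociatedPrime p N ∨ IsAssociatedPrime p (M ⧸ N) := by
  obtain ⟨hprime, x, hx⟩ := isAssociatedPrime_iff.mp hp
  by_cases hc : ∃ a : R, a • x ∈ N ∧ a • x ≠ 0
  · obtain ⟨a, haN, ha0⟩ := hc
    left
    refine isAssociatedPrime_iff.mpr ⟨hprime, ⟨a • x, haN⟩, ?_⟩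
    ext b
    rw [mem_colon_bot_singleton_iff', hx, mem_colon_bot_singleton_iff']
    constructor
    · intro hb
      refine Subtype.ext ?_
      show b • (a • x) = 0
      rw [smul_comm, hb, smul_zero]
    · intro hb
      have hb' : (b * a) • x = 0 := by
        have := congrArg (Subtype.val) hb
        simpa [mul_smul] using this
      have hba : b * a ∈ p := by rw [hx, mem_colon_bot_singleton_iff']; exact hb'
      have hanp : a ∉ p := by
        intro hap
        rw [hx, mem_colon_bot_singleton_iff'] at hap
        exact ha0 hap
      rcases hprime.mem_or_mem hba with h | h
      · rw [hx, mem_colon_bot_singleton_iff'] at h; exact h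
      · exact absurd h hanp
  · push_neg at hc
    right
    refine isAssociatedPrime_iff.mpr ⟨hprime, N.mkQ x, ?_⟩
    ext b
    rw [mem_colon_bot_singleton_iff', hx, mem_colon_bot_singleton_iff']
    rw [← map_smul]
    simp only [Submodule.mkQ_apply, Submodule.Quotient.mk_eq_zero]
    exact ⟨fun hb => by rw [hb]; exact N.zero_mem, fun hb => hc b hb⟩

lemma associatedPrimes_span_singleton_eq [IsNoetherianRing R] {y : M} {p : Ideal R}
    (hy : p = (⊥ : Submodule R M).colon {y}) (hp : p.IsPrime) :
    associatedPrimes R ↥(Submodule.span R {y}) = {p} := by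
  have htors : Ideal.torsionOf R M y = p := by
    ext b
    rw [Ideal.mem_torsionOf_iff, hy, mem_colon_bot_singleton_iff']
  have e : (R ⧸ p) ≃ₗ[R] ↥(Submodule.span R {y}) :=
    (Submodule.quotEquivOfEq _ _ htors.symm) ≪≫ₗ
      Ideal.quotTorsionOfEquivSpanSingleton R M y
  rw [← LinearEquiv.AssociatedPrimes.eq e,
    associatedPrimes.eq_singleton_of_isPrimary hp.isPrimary, hp.radical]

lemma associatedPrimes_finite (R M : Type*) [CommRing R] [IsNoetherianRing R]
    [AddCommGroup M] [Module R M] [Module.Finite R M] :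
    (associatedPrimes R M).Finite := by
  have hwf : WellFounded ((· > ·) : Submodule R M → Submodule R M → Prop) :=
    IsNoetherian.wf inferInstance
  suffices H : ∀ N : Submodule R M, (associatedPrimes R (M ⧸ N)).Finite by
    have h0 := H ⊥
    rwa [LinearEquiv.AssociatedPrimes.eq (Submodule.quotEquivOfEqBot ⊥ rfl)] at h0
  intro N
  induction N using hwf.induction with
  | _ N ih =>
  by_cases hQ : Subsingleton (M ⧸ N)
  · rw [associatedPrimes.eq_empty_of_subsingleton]; exact Set.finite_empty
  · have : Nontrivial (M ⧸ N) := not_subsingleton_iff_nontrivial.mp hQ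
    obtain ⟨p, hp⟩ := associatedPrimes.nonempty R (M ⧸ N)
    obtain ⟨hprime, y, hy⟩ := isAssociatedPrime_iff.mp hp
    have hy0 : y ≠ 0 := by
      rintro rfl
      apply hprime.ne_top
      rw [hy, Ideal.eq_top_iff_one, mem_colon_bot_singleton_iff', one_smul]
    set N' : Submodule R M := (Submodule.span R {y}).comap N.mkQ with hN'
    have hle : N ≤ N' := fun x hx => by
      simp only [hN', Submodule.mem_comap, Submodule.mkQ_apply,
        (Submodule.Quotient.mk_eq_zero N).mpr hx]
      exact Submodule.zero_mem _
    have hlt : N < N' := by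
      obtain ⟨x, hx⟩ := N.mkQ_surjective y
      refine lt_of_le_of_ne hle fun hEq => hy0 ?_
      have hxN' : x ∈ N' := by
        simp [hN', Submodule.mem_comap, hx, Submodule.mem_span_singleton_self]
      rw [← hEq] at hxN'
      rwa [← hx, Submodule.mkQ_apply, Submodule.Quotient.mk_eq_zero]
    have hmap : Submodule.map N.mkQ N' = Submodule.span R {y} :=
      Submodule.map_comap_eq_of_surjective (N.mkQ_surjective) _
    have e : ((M ⧸ N) ⧸ (Submodule.span R {y})) ≃ₗ[R] M ⧸ N' :=
      (Submodule.quotEquivOfEq _ _ hmap.symm) ≪≫ₗ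
        (Submodule.quotientQuotientEquivQuotient N N' hle)
    have hsub : associatedPrimes R (M ⧸ N) ⊆
        insert p (associatedPrimes R (M ⧸ N')) := by
      intro q hq
      rcases isAssociatedPrime_sub_or_quot hq (Submodule.span R {y}) with h | h
      · left
        have := associatedPrimes_span_singleton_eq hy hprime
        rw [← Set.mem_singleton_iff, ← this]
        exact h
      · right
        rw [← LinearEquiv.AssociatedPrimes.eq e]
        exact h
    exact Set.Finite.subset ((ih N' hlt).insert p) hsub

section Local

variable [IsLocalRing R] [IsNoetherianRing R]

/-- If no nonzero element of `M` is killed by the maximal ideal, then the maximal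
ideal contains a regular element for `M`. -/
lemma exists_regular_of_noM [Module.Finite R M]
    (hM : ∀ y : M, (∀ a ∈ maximalIdeal R, a • y = 0) → y = 0) :
    ∃ r ∈ maximalIdeal R, IsSMulRegular M r := by
  by_contra hcon
  push_neg at hcon
  have hsub : (maximalIdeal R : Set R) ⊆ ⋃ p ∈ associatedPrimes R M, ↑p := by
    rw [biUnion_associatedPrimes_eq_compl_regular R M]
    exact fun r hr => hcon r hr
  have hfin := associatedPrimes_finite R M
  rw [show (⋃ p ∈ associatedPrimes R M, (p : Set R)) =
      ⋃ p ∈ (hfin.toFinset : Set (Ideal R)), (id p : Ideal R) by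
    simp [Set.Finite.coe_toFinset]] at hsub
  obtain ⟨p, hpmem, hple⟩ := (Ideal.subset_union_prime ⊥ ⊥
    (fun p hp _ _ => (Set.Finite.mem_toFinset hfin |>.mp hp).isPrime)).mp hsub
  rw [Set.Finite.mem_toFinset hfin] at hpmem
  obtain ⟨hprime, x, hx⟩ := isAssociatedPrime_iff.mp hpmem
  have hx0 : x = 0 := hM x fun a ha => by
    have : a ∈ p := hple ha
    rwa [hx, mem_colon_bot_singleton_iff'] at this
  apply hprime.ne_top
  rw [hx, hx0, Ideal.eq_top_iff_one, mem_colon_bot_singleton_iff', one_smul]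

lemma mem_rsmul_top_iff (r : R) (x : M) :
    x ∈ r • (⊤ : Submodule R M) ↔ ∃ z : M, r • z = x := by
  rw [← SetLike.mem_coe, Submodule.coe_pointwise_smul]
  simp [Set.mem_smul_set]

/-- The "E" computation: if `r` is `M`-regular and `[a, b]` is weakly regular on `M`,
then any `y` with `a • y, b • y ∈ rM` lies in `rM`. -/
lemma mem_smul_top_of_pair {r a b : R} (hr : IsSMulRegular M r)
    (hab : IsWeaklyRegular M [a, b]) (y : M)
    (hay : a • y ∈ r • (⊤ : Submodule R M)) (hby : b • y ∈ r • (⊤ : Submodule R M)) :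
    y ∈ r • (⊤ : Submodule R M) := by
  rw [isWeaklyRegular_cons_iff, isWeaklyRegular_singleton_iff] at hab
  obtain ⟨ha, hb⟩ := hab
  have hbq : ∀ z : M, b • z ∈ a • (⊤ : Submodule R M) → z ∈ a • (⊤ : Submodule R M) :=
    (isSMulRegular_quotient_iff_mem_of_smul_mem _ _).mp hb
  obtain ⟨z, hz⟩ := (mem_rsmul_top_iff r _).mp hay
  obtain ⟨w, hw⟩ := (mem_rsmul_top_iff r _).mp hby
  have key : a • w = b • z := by
    apply hr
    show r • (a • w) = r • (b • z)
    rw [smul_comm r a, smul_comm r b, hz, hw, smul_comm a b]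
  have hz' : z ∈ a • (⊤ : Submodule R M) := by
    apply hbq
    rw [← key]
    exact Submodule.smul_mem_pointwise_smul w a ⊤ trivial
  obtain ⟨z₁, hz₁⟩ := (mem_rsmul_top_iff a _).mp hz'
  have : a • y = a • (r • z₁) := by
    rw [← hz, ← hz₁, smul_comm r a]
  rw [ha this]
  exact Submodule.smul_mem_pointwise_smul z₁ r ⊤ trivial

end Local

section Local2

variable [IsLocalRing R] [IsNoetherianRing R]

lemma noM_of_mem_regular {r : R} (hr : r ∈ maximalIdeal R) (hreg : IsSMulRegular M r) :
    ∀ y : M, (∀ a ∈ maximalIdeal R, a • y = 0) → y = 0 :=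
  fun y hy => hreg (show r • y = r • 0 by rw [hy r hr, smul_zero])

lemma exists_common_regular (M N : Type*) [AddCommGroup M] [Module R M] [Module.Finite R M]
    [AddCommGroup N] [Module R N] [Module.Finite R N]
    (hM : ∀ y : M, (∀ a ∈ maximalIdeal R, a • y = 0) → y = 0)
    (hN : ∀ y : N, (∀ a ∈ maximalIdeal R, a • y = 0) → y = 0) :
    ∃ r ∈ maximalIdeal R, IsSMulRegular M r ∧ IsSMulRegular N r := by
  obtain ⟨r, hrm, hreg⟩ := exists_regular_of_noM (M := M × N) (fun y hy => by
    have h1 := hM y.1 (fun a ha => congrArg Prod.fst (hy a ha))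
    have h2 := hN y.2 (fun a ha => congrArg Prod.snd (hy a ha))
    exact Prod.ext h1 h2)
  refine ⟨r, hrm, fun x y hxy => ?_, fun x y hxy => ?_⟩
  · have := hreg (a₁ := (x, (0 : N))) (a₂ := (y, (0 : N)))
      (by show (r • x, r • (0:N)) = (r • y, r • (0:N)); rw [show r • x = r • y from hxy])
    exact congrArg Prod.fst this
  · have := hreg (a₁ := ((0 : M), x)) (a₂ := ((0 : M), y))
      (by show (r • (0:M), r • x) = (r • (0:M), r • y); rw [show r • x = r • y from hxy])
    exact congrArg Prod.snd this

lemma noM_quotSMulTop {r a b : R} (hr : IsSMulRegular M r)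
    (ha : a ∈ maximalIdeal R) (hb : b ∈ maximalIdeal R)
    (hab : IsWeaklyRegular M [a, b]) :
    ∀ y : QuotSMulTop r M, (∀ c ∈ maximalIdeal R, c • y = 0) → y = 0 := by
  intro y hy
  obtain ⟨x, rfl⟩ := Submodule.Quotient.mk_surjective _ y
  rw [Submodule.Quotient.mk_eq_zero]
  refine mem_smul_top_of_pair hr hab x ?_ ?_
  · have := hy a ha
    rwa [← Submodule.Quotient.mk_smul, Submodule.Quotient.mk_eq_zero] at this
  · have := hy b hb
    rwa [← Submodule.Quotient.mk_smul, Submodule.Quotient.mk_eq_zero] at this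

end Local2

/-- Commuting two quotients. -/
noncomputable def quotSMulTopComm (M : Type*) [AddCommGroup M] [Module R M] (r s : R) :
    QuotSMulTop s (QuotSMulTop r M) ≃ₗ[R] QuotSMulTop r (QuotSMulTop s M) := by
  have e1 : ∀ a b : R, (M ⧸ (Ideal.ofList [a, b] • ⊤ : Submodule R M)) ≃ₗ[R]
      QuotSMulTop b (QuotSMulTop a M) := fun a b =>
    (Submodule.quotOfListConsSMulTopEquivQuotSMulTopInner M a [b]) ≪≫ₗ
      Submodule.quotEquivOfEq _ _
        (by rw [Ideal.ofList_singleton, Submodule.ideal_span_singleton_smul])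
  have hEq : (Ideal.ofList [r, s] : Ideal R) = Ideal.ofList [s, r] := by
    show Ideal.span _ = Ideal.span _
    congr 1
    ext x
    simp only [List.mem_cons, List.not_mem_nil, or_false, Set.mem_setOf_eq]
    tauto
  exact (e1 r s).symm ≪≫ₗ Submodule.quotEquivOfEq _ _ (by rw [hEq]) ≪≫ₗ e1 s r

section DepC

variable {R : Type*} [CommRing R] [IsLocalRing R] [IsNoetherianRing R]

/-- Depth drop: if `r ∈ m` is regular on `M` and there is a weakly regular sequence on `M`
of length `n+1` inside `m`, then there is one of length `n` on `M⧸rM` inside `m`. -/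
lemma dep_quotSMulTop (n : ℕ) :
    ∀ (M : Type u_2) [AddCommGroup M] [Module R M] [Module.Finite R M]
      (r : R) (_ : r ∈ maximalIdeal R) (_ : IsSMulRegular M r)
      (as : List R) (_ : as.length = n + 1) (_ : ∀ a ∈ as, a ∈ maximalIdeal R)
      (_ : IsWeaklyRegular M as),
      ∃ bs : List R, bs.length = n ∧ (∀ b ∈ bs, b ∈ maximalIdeal R) ∧
        IsWeaklyRegular (QuotSMulTop r M) bs := by
  induction n with
  | zero => exact fun M _ _ _ r _ _ _ _ _ _ => ⟨[], rfl, by simp, IsWeaklyRegular.nil R _⟩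
  | succ n ih =>
    intro M _ _ _ r hrm hr as hlen hasm hwr
    -- decompose as = a₁ :: a₂ :: tail and as = pref ++ [lst]
    obtain ⟨a₁, as₁, rfl⟩ := List.exists_cons_of_ne_nil
      (by rintro rfl; simp at hlen : as ≠ [])
    obtain ⟨a₂, tail, rfl⟩ := List.exists_cons_of_ne_nil
      (by intro hh; rw [hh] at hlen; simp at hlen : as₁ ≠ [])
    set as : List R := a₁ :: a₂ :: tail with has
    have hne : as ≠ [] := by simp [has]
    set pref : List R := as.dropLast with hpref
    set lst : R := as.getLast hne with hlst
    have hdecomp : pref ++ [lst] = as := List.dropLast_append_getLast hne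
    have hpreflen : pref.length = n + 1 := by
      rw [hpref, List.length_dropLast, hlen]
      omega
    have hprefm : ∀ a ∈ pref, a ∈ maximalIdeal R :=
      fun a haa => hasm a ((List.dropLast_sublist _).subset haa)
    have hlstm : lst ∈ maximalIdeal R := hasm _ (List.getLast_mem hne)
    -- the pair [a₁, a₂]
    have hpair : IsWeaklyRegular M [a₁, a₂] := by
      have hwr' : IsWeaklyRegular M ([a₁, a₂] ++ tail) := hwr
      rw [isWeaklyRegular_append_iff] at hwr'
      exact hwr'.1
    -- split the weakly regular sequence
    have hwr2 : IsWeaklyRegular M (pref ++ [lst]) := hdecomp ▸ hwr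
    rw [isWeaklyRegular_append_iff] at hwr2
    obtain ⟨hwrpref, hwrlst⟩ := hwr2
    rw [isWeaklyRegular_singleton_iff] at hwrlst
    -- choose s regular on both towers
    obtain ⟨s, hsm, hs1, hs2⟩ := exists_common_regular
      (M ⧸ (Ideal.ofList pref • ⊤ : Submodule R M)) (QuotSMulTop r M)
      (noM_of_mem_regular hlstm hwrlst)
      (noM_quotSMulTop hr (hasm a₁ (by simp [has])) (hasm a₂ (by simp [has])) hpair)
    -- pref ++ [s] is weakly regular on M
    have hws : IsWeaklyRegular M (pref ++ [s]) := by
      rw [isWeaklyRegular_append_iff]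
      exact ⟨hwrpref, (isWeaklyRegular_singleton_iff _ _).mpr hs1⟩
    -- permute to s :: pref
    have hperm : IsWeaklyRegular M (s :: pref) :=
      IsLocalRing.isWeaklyRegular_of_perm_of_subset_maximalIdeal hws
        (List.perm_append_singleton s pref)
        (by
          intro x hx
          rcases List.mem_append.mp hx with h | h
          · exact hprefm x h
          · obtain rfl := List.mem_singleton.mp h; exact hsm)
    rw [isWeaklyRegular_cons_iff] at hperm
    obtain ⟨hsM, hQpref⟩ := hperm
    -- r is regular on QuotSMulTop s M
    have hrs : IsWeaklyRegular M [r, s] := by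
      rw [isWeaklyRegular_cons_iff, isWeaklyRegular_singleton_iff]
      exact ⟨hr, hs2⟩
    have hsr : IsWeaklyRegular M [s, r] :=
      IsLocalRing.isWeaklyRegular_of_perm_of_subset_maximalIdeal hrs
        (List.Perm.swap s r []) (by
          intro x hx
          rcases List.mem_cons.mp hx with h | h
          · subst h; exact hrm
          · obtain rfl := List.mem_singleton.mp h; exact hsm)
    have hrQs : IsSMulRegular (QuotSMulTop s M) r := by
      rw [isWeaklyRegular_cons_iff, isWeaklyRegular_singleton_iff] at hsr
      exact hsr.2
    -- apply induction hypothesis to QuotSMulTop s M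
    obtain ⟨bs, hbslen, hbsm, hbswr⟩ := ih (QuotSMulTop s M) r hrm hrQs pref hpreflen hprefm hQpref
    refine ⟨s :: bs, by simp [hbslen], ?_, ?_⟩
    · intro b hb
      rcases List.mem_cons.mp hb with h | h
      · rw [h]; exact hsm
      · exact hbsm b h
    · rw [isWeaklyRegular_cons_iff]
      refine ⟨hs2, ?_⟩
      exact ((quotSMulTopComm M r s).isWeaklyRegular_congr bs).mpr hbswr

end DepC

section DepL

variable {R : Type*} [CommRing R] [IsLocalRing R] [IsNoetherianRing R]

/-- Main depth lemma: for a surjection `f : M → P` with kernel `K`,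
`depth K ≥ n+1` and `depth M ≥ n` imply `depth P ≥ n`. -/
lemma dep_of_surjective (n : ℕ) :
    ∀ (M P : Type u_2) [AddCommGroup M] [Module R M] [Module.Finite R M]
      [AddCommGroup P] [Module R P]
      (f : M →ₗ[R] P) (_ : Function.Surjective f)
      (_ : ∃ as : List R, as.length = n + 1 ∧ (∀ a ∈ as, a ∈ maximalIdeal R) ∧
            IsWeaklyRegular (LinearMap.ker f) as)
      (_ : ∃ cs : List R, cs.length = n ∧ (∀ c ∈ cs, c ∈ maximalIdeal R) ∧
            IsWeaklyRegular M cs),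
      ∃ ds : List R, ds.length = n ∧ (∀ d ∈ ds, d ∈ maximalIdeal R) ∧
        IsWeaklyRegular P ds := by
  induction n with
  | zero => exact fun M P _ _ _ _ _ f hf _ _ => ⟨[], rfl, by simp, IsWeaklyRegular.nil R _⟩
  | succ n ih =>
    intro M P _ _ _ _ _ f hf hK hM
    obtain ⟨as, haslen, hasm, haswr⟩ := hK
    obtain ⟨cs, hcslen, hcsm, hcswr⟩ := hM
    set K := LinearMap.ker f with hKdef
    have : IsNoetherian R M := inferInstance
    have hKfin : Module.Finite R K := Module.Finite.iff_fg.mpr (IsNoetherian.noetherian K)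
    have hPfin : Module.Finite R P := Module.Finite.of_surjective f hf
    -- decompose as = a₁ :: a₂ :: atail
    obtain ⟨a₁, as₁, rfl⟩ := List.exists_cons_of_ne_nil
      (by rintro rfl; simp at haslen : as ≠ [])
    obtain ⟨a₂, atail, rfl⟩ := List.exists_cons_of_ne_nil
      (by rintro rfl; simp at haslen : as₁ ≠ [])
    have hpairK : IsWeaklyRegular K [a₁, a₂] := by
      have hwr' : IsWeaklyRegular K ([a₁, a₂] ++ atail) := haswr
      rw [isWeaklyRegular_append_iff] at hwr'
      exact hwr'.1
    have ha₁ : IsSMulRegular K a₁ := by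
      rw [isWeaklyRegular_cons_iff] at haswr
      exact haswr.1
    -- decompose cs = c₁ :: ctail
    obtain ⟨c₁, ctail, rfl⟩ := List.exists_cons_of_ne_nil
      (by rintro rfl; simp at hcslen : cs ≠ [])
    have hc₁ : IsSMulRegular M c₁ := by
      rw [isWeaklyRegular_cons_iff] at hcswr
      exact hcswr.1
    have hNoMM : ∀ y : M, (∀ a ∈ maximalIdeal R, a • y = 0) → y = 0 :=
      noM_of_mem_regular (hcsm c₁ (by simp)) hc₁
    have hNoMK : ∀ y : K, (∀ a ∈ maximalIdeal R, a • y = 0) → y = 0 :=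
      noM_of_mem_regular (hasm a₁ (by simp)) ha₁
    -- common regular element r' on M and K
    obtain ⟨r', hr'm, hr'M, hr'K⟩ := exists_common_regular M K hNoMM hNoMK
    -- s' regular on K/r'K
    obtain ⟨s', hs'm, hs'⟩ := exists_regular_of_noM (M := QuotSMulTop r' K)
      (noM_quotSMulTop hr'K (hasm a₁ (by simp)) (hasm a₂ (by simp)) hpairK)
    -- P has no nonzero element killed by the maximal ideal
    have hNoMP : ∀ p : P, (∀ a ∈ maximalIdeal R, a • p = 0) → p = 0 := by
      intro p hp
      obtain ⟨y, rfl⟩ := hf p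
      have hmem : ∀ t ∈ maximalIdeal R, t • y ∈ K := by
        intro t ht
        rw [hKdef, LinearMap.mem_ker, map_smul, hp t ht]
      set k₁ : K := ⟨r' • y, hmem r' hr'm⟩ with hk₁
      set k₂ : K := ⟨s' • y, hmem s' hs'm⟩ with hk₂
      have hsk : s' • k₁ ∈ r' • (⊤ : Submodule R K) := by
        rw [mem_rsmul_top_iff]
        exact ⟨k₂, Subtype.ext (by
          show r' • (s' • y) = s' • (r' • y)
          rw [smul_comm])⟩
      have hk₁mem : k₁ ∈ r' • (⊤ : Submodule R K) :=
        (isSMulRegular_quotient_iff_mem_of_smul_mem _ _).mp hs' _ hsk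
      obtain ⟨z₁, hz₁⟩ := (mem_rsmul_top_iff r' k₁).mp hk₁mem
      have : r' • (z₁ : M) = r' • y := by
        have := congrArg (Subtype.val) hz₁
        simpa using this
      have hyK : y ∈ K := by
        have hy := hr'M this
        rw [← hy]
        exact z₁.2
      rw [hKdef, LinearMap.mem_ker] at hyK
      exact hyK
    -- common regular element r on M and P
    obtain ⟨r, hrm, hrM, hrP⟩ := exists_common_regular M P hNoMM hNoMP
    have hrK : IsSMulRegular K r := hrM.submodule K
    -- quotient sequences
    obtain ⟨bs, hbslen, hbsm, hbswr⟩ := dep_quotSMulTop (R := R) (n + 1) K r hrm hrK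
      (a₁ :: a₂ :: atail) haslen hasm haswr
    obtain ⟨es, heslen, hesm, heswr⟩ := dep_quotSMulTop (R := R) n M r hrm hrM
      (c₁ :: ctail) hcslen hcsm hcswr
    -- induced map on quotients
    set fbar : QuotSMulTop r M →ₗ[R] QuotSMulTop r P := QuotSMulTop.map r f with hfbar
    have hfbar_mk : ∀ x : M, fbar (Submodule.Quotient.mk x) = Submodule.Quotient.mk (f x) :=
      fun x => QuotSMulTop.map_apply_mk r f x
    have hfbarsurj : Function.Surjective fbar := by
      intro q
      obtain ⟨p, rfl⟩ := Submodule.Quotient.mk_surjective _ q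
      obtain ⟨y, rfl⟩ := hf p
      exact ⟨Submodule.Quotient.mk y, hfbar_mk y⟩
    -- the map K → ker fbar
    set ψ : K →ₗ[R] QuotSMulTop r M :=
      (Submodule.mkQ _).comp K.subtype with hψ
    have hψrange : ∀ x : K, ψ x ∈ LinearMap.ker fbar := by
      intro x
      rw [LinearMap.mem_ker]
      show fbar (Submodule.Quotient.mk (x : M)) = 0
      rw [hfbar_mk, show f (x : M) = 0 from x.2]
      simp
    set φ : K →ₗ[R] LinearMap.ker fbar := ψ.codRestrict _ hψrange with hφ
    have hφsurj : Function.Surjective φ := by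
      rintro ⟨q, hq⟩
      obtain ⟨x, rfl⟩ := Submodule.Quotient.mk_surjective _ q
      rw [LinearMap.mem_ker, hfbar_mk, Submodule.Quotient.mk_eq_zero] at hq
      obtain ⟨p, hp⟩ := (mem_rsmul_top_iff r (f x)).mp hq
      obtain ⟨z, hz⟩ := hf p
      have hxK : x - r • z ∈ K := by
        rw [hKdef, LinearMap.mem_ker, map_sub, map_smul, hz, hp, sub_self]
      refine ⟨⟨x - r • z, hxK⟩, ?_⟩
      apply Subtype.ext
      show Submodule.Quotient.mk (x - r • z) = Submodule.Quotient.mk x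
      rw [Submodule.Quotient.eq]
      have : x - r • z - x = -(r • z) := by abel
      rw [this]
      exact neg_mem (Submodule.smul_mem_pointwise_smul z r ⊤ trivial)
    have hkerφ : LinearMap.ker φ = r • (⊤ : Submodule R K) := by
      ext x
      constructor
      · intro hx
        rw [LinearMap.mem_ker] at hx
        have hψx : Submodule.Quotient.mk (x : M) = (0 : QuotSMulTop r M) :=
          congrArg Subtype.val hx
        rw [Submodule.Quotient.mk_eq_zero] at hψx
        obtain ⟨z, hz⟩ := (mem_rsmul_top_iff r (x : M)).mp hψx
        have hzK : z ∈ K := by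
          rw [hKdef, LinearMap.mem_ker]
          apply hrP
          show r • f z = r • 0
          rw [smul_zero, ← map_smul, hz]
          exact x.2
        exact (mem_rsmul_top_iff r x).mpr ⟨⟨z, hzK⟩, Subtype.ext hz⟩
      · intro hx
        obtain ⟨z, hz⟩ := (mem_rsmul_top_iff r x).mp hx
        rw [LinearMap.mem_ker]
        apply Subtype.ext
        show Submodule.Quotient.mk (x : M) = (0 : QuotSMulTop r M)
        rw [Submodule.Quotient.mk_eq_zero, ← hz]
        exact Submodule.smul_mem_pointwise_smul _ r ⊤ trivial
    have e : QuotSMulTop r K ≃ₗ[R] ↥(LinearMap.ker fbar) :=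
      (Submodule.quotEquivOfEq _ _ hkerφ.symm) ≪≫ₗ
        (LinearMap.quotKerEquivOfSurjective φ hφsurj)
    have hKbar : IsWeaklyRegular (LinearMap.ker fbar) bs :=
      (e.isWeaklyRegular_congr bs).mp hbswr
    obtain ⟨ds, hdslen, hdsm, hdswr⟩ := ih (QuotSMulTop r M) (QuotSMulTop r P)
      fbar hfbarsurj ⟨bs, hbslen, hbsm, hKbar⟩ ⟨es, heslen, hesm, heswr⟩
    refine ⟨r :: ds, by simp [hdslen], ?_, IsWeaklyRegular.cons hrP hdswr⟩
    intro d hd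
    rcases List.mem_cons.mp hd with hh | hh
    · subst hh; exact hrm
    · exact hdsm d hh

end DepL

section Boundary

variable {A : Type*} [CommRing A] [IsLocalRing A]
variable {M : Type*} [AddCommGroup M] [Module A M]

lemma isWeaklyRegular_of_subsingleton [Subsingleton M] (l : List A) :
    IsWeaklyRegular M l := by
  induction l generalizing M with
  | nil => exact IsWeaklyRegular.nil A M
  | cons a l ih =>
    refine IsWeaklyRegular.cons (fun x y _ => Subsingleton.elim x y) ?_
    have : Subsingleton (QuotSMulTop a M) :=
      (Submodule.Quotient.mk_surjective _).subsingleton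
    exact ih

lemma depList_take {n k : ℕ} (hkn : k ≤ n)
    (h : ∃ rs : List A, rs.length = n ∧ (∀ r ∈ rs, r ∈ maximalIdeal A) ∧
      IsWeaklyRegular M rs) :
    ∃ rs : List A, rs.length = k ∧ (∀ r ∈ rs, r ∈ maximalIdeal A) ∧
      IsWeaklyRegular M rs := by
  obtain ⟨rs, hlen, hm, hwr⟩ := h
  refine ⟨rs.take k, ?_, fun r hr => hm r (List.take_subset _ _ hr), ?_⟩
  · rw [List.length_take, hlen]; omega
  · rw [← List.take_append_drop k rs, isWeaklyRegular_append_iff] at hwr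
    exact hwr.1

lemma depList_of_moduleDepth (n : ℕ) (h : (n : ℕ∞) ≤ moduleDepth A M) :
    ∃ rs : List A, rs.length = n ∧ (∀ r ∈ rs, r ∈ maximalIdeal A) ∧
      IsWeaklyRegular M rs := by
  rcases n with - | k
  · exact ⟨[], rfl, by simp, IsWeaklyRegular.nil A M⟩
  have hex : ∃ x ∈ {n : ℕ∞ | ∃ rs : List A, (rs.length : ℕ∞) = n ∧
      (∀ r ∈ rs, r ∈ maximalIdeal A) ∧ IsWeaklyRegular M rs},
      ((k + 1 : ℕ) : ℕ∞) ≤ x := by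
    by_contra hcon
    push_neg at hcon
    have hsup : moduleDepth A M ≤ (k : ℕ∞) := by
      apply sSup_le
      intro x hx
      have hlt := hcon x hx
      have hxt : x ≠ ⊤ := by
        rintro rfl
        exact absurd le_top (not_le.mpr hlt)
      lift x to ℕ using hxt
      rw [Nat.cast_lt] at hlt
      exact_mod_cast Nat.lt_succ_iff.mp hlt
    have := le_trans h hsup
    rw [Nat.cast_le] at this
    omega
  obtain ⟨x, hx, hkx⟩ := hex
  obtain ⟨rs, hlen, hm, hwr⟩ := hx
  refine depList_take (n := rs.length) ?_ ⟨rs, rfl, hm, hwr⟩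
  rw [← hlen, Nat.cast_le] at hkx
  exact hkx

lemma one_le_moduleDepth {r : A} (hr : r ∈ maximalIdeal A) (hreg : IsSMulRegular M r) :
    (1 : ℕ∞) ≤ moduleDepth A M := by
  apply le_sSup
  refine ⟨[r], by simp, ?_, ?_⟩
  · intro x hx
    obtain rfl := List.mem_singleton.mp hx
    exact hr
  · rw [isWeaklyRegular_singleton_iff]
    exact hreg

end Boundary

open CategoryTheory

universe u

/-- **Acyclicity lemma.** Let `(A, m)` be a Noetherian local ring and let
`0 → M_h → M_{h-1} → ⋯ → M_1 → M_0` be a complex of finitely generated `A`-modules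
(`M_i` in homological degree `i`) with `depth_A (M_i) ≥ i` for all `0 ≤ i ≤ h`.  If for
every `i ≥ 1` the homology `H_i` of the complex is zero or has depth `0` over `A`, then
`H_i = 0` for all `i ≥ 1`: the complex is exact in all positive degrees. -/
theorem acyclicity_lemma
    (A : Type u) [CommRing A] [IsLocalRing A] [IsNoetherianRing A]
    (h : ℕ) (C : ChainComplex (ModuleCat.{u} A) ℕ)
    (hfg : ∀ i : ℕ, Module.Finite A (C.X i))
    (hbound : ∀ i : ℕ, h < i → Limits.IsZero (C.X i))
    (hdepth : ∀ i : ℕ, i ≤ h → (i : ℕ∞) ≤ moduleDepth A (C.X i))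
    (hhomology : ∀ i : ℕ, 1 ≤ i →
      Limits.IsZero (C.homology i) ∨ moduleDepth A (C.homology i) = 0) :
    ∀ i : ℕ, 1 ≤ i → Limits.IsZero (C.homology i) := by
  classical
  -- homology vanishes above h
  have hzero_homology : ∀ i : ℕ, h < i → Limits.IsZero (C.homology i) := by
    intro i hi
    rw [← C.exactAt_iff_isZero_homology]
    rw [C.exactAt_iff]
    rw [ShortComplex.moduleCat_exact_iff]
    intro x hx
    have hsub : Subsingleton ((C.sc i).X₂) := by
      have := hbound i hi
      exact ModuleCat.subsingleton_of_isZero this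
    exact ⟨0, by rw [map_zero]; exact (Subsingleton.elim _ _)⟩
  -- the main inductive step
  have main : ∀ q : ℕ, 1 ≤ q → (∀ i' : ℕ, q < i' → Limits.IsZero (C.homology i')) →
      Limits.IsZero (C.homology q) := by
    intro q hq1 habove
    by_cases hqh : h < q
    · exact hzero_homology q hqh
    push_neg at hqh
    rcases hhomology q hq1 with hz | hdep0
    · exact hz
    exfalso
    obtain ⟨j, rfl⟩ : ∃ j : ℕ, q = j + 1 := ⟨q - 1, by omega⟩
    -- exactness above q, concretely
    have hex : ∀ k : ℕ, j + 1 ≤ k →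
        LinearMap.range (C.d (k+2) (k+1)).hom = LinearMap.ker (C.d (k+1) k).hom := by
      intro k hk
      have hEx : C.ExactAt (k+1) := by
        rw [C.exactAt_iff_isZero_homology]
        exact habove (k+1) (by omega)
      rw [C.exactAt_iff' (k+2) (k+1) k (by simp [ChainComplex.prev])
        (by simp [ChainComplex.next_nat_succ])] at hEx
      exact hEx.moduleCat_range_eq_ker
  -- the descending chain of depth estimates
    have hchain : ∀ t k : ℕ, j + 1 ≤ k → h ≤ k + t →
        ∃ rs : List A, rs.length = k + 1 ∧ (∀ r ∈ rs, r ∈ maximalIdeal A) ∧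
          IsWeaklyRegular ↥(LinearMap.range (C.d (k+1) k).hom) rs := by
      intro t
      induction t with
      | zero =>
        intro k hk hkt
        have hz : Limits.IsZero (C.X (k+1)) := hbound (k+1) (by omega)
        have hsub : Subsingleton (C.X (k+1)) := ModuleCat.subsingleton_of_isZero hz
        have hsub2 : Subsingleton ↥(LinearMap.range (C.d (k+1) k).hom) := by
          constructor
          rintro ⟨x, y, rfl⟩ ⟨x', y', rfl⟩
          exact Subtype.ext (by rw [Subsingleton.elim y y'])
        refine ⟨List.replicate (k+1) 0, by simp, ?_, isWeaklyRegular_of_subsingleton _⟩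
        intro r hr
        obtain rfl := List.eq_of_mem_replicate hr
        exact zero_mem _
      | succ t ih =>
        intro k hk hkt
        by_cases hcase : h ≤ k + t
        · exact ih k hk hcase
        · have hk1h : k + 1 ≤ h := by omega
          letI := hfg (k+1)
          obtain ⟨bs, hbslen, hbsm, hbswr⟩ := ih (k+1) (by omega) (by omega)
          have hXdep := depList_of_moduleDepth (k+1) (hdepth (k+1) hk1h)
          have hker : LinearMap.ker ((C.d (k+1) k).hom.rangeRestrict) =
              LinearMap.range (C.d (k+2) (k+1)).hom := by
            rw [LinearMap.ker_rangeRestrict, ← hex k hk]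
          refine dep_of_surjective (k+1) (C.X (k+1)) ↥(LinearMap.range (C.d (k+1) k).hom)
            (C.d (k+1) k).hom.rangeRestrict (LinearMap.surjective_rangeRestrict _)
            ⟨bs, hbslen, hbsm, ?_⟩ hXdep
          rw [hker]
          exact hbswr
    -- concrete description of homology at j+1
    set S : ShortComplex (ModuleCat A) := C.sc' (j+2) (j+1) j with hS
    have hiso : C.homology (j+1) ≅ S.moduleCatLeftHomologyData.H :=
      (C.homologyIsoSc' (j+2) (j+1) j (by simp [ChainComplex.prev])
        (by simp [ChainComplex.next_nat_succ])) ≪≫ S.moduleCatHomologyIso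
    letI := hfg (j+1)
    haveI : Module.Finite A ↥S.X₂ := hfg (j+1)
    haveI : IsNoetherian A ↥S.X₂ := inferInstanceAs (IsNoetherian A (C.X (j+1)))
    haveI hallfin : Module.Finite A ↥(LinearMap.ker S.g.hom) :=
      Module.Finite.iff_fg.mpr (IsNoetherian.noetherian _)
    -- depth ≥ 2 for the image submodule (as range of moduleCatToCycles)
    obtain ⟨rs2, hrs2len, hrs2m, hrs2wr⟩ :=
      depList_take (n := j + 2) (k := 2) (by omega) (hchain h (j+1) le_rfl (by omega))
    have e2 : ↥(LinearMap.range S.moduleCatToCycles) ≃ₗ[A]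
        ↥(LinearMap.range (C.d (j+2) (j+1)).hom) := by
      refine LinearEquiv.ofBijective
        (LinearMap.codRestrict _
          (((LinearMap.ker S.g.hom).subtype).comp (LinearMap.range S.moduleCatToCycles).subtype)
          ?_) ⟨?_, ?_⟩
      · rintro ⟨z, w, rfl⟩
        exact ⟨w, rfl⟩
      · intro z z' hzz
        have := congrArg Subtype.val hzz
        exact Subtype.ext (Subtype.ext this)
      · rintro ⟨x, w, rfl⟩
        exact ⟨⟨S.moduleCatToCycles w, ⟨w, rfl⟩⟩, Subtype.ext rfl⟩
    have hrs2wr' : IsWeaklyRegular ↥(LinearMap.range S.moduleCatToCycles) rs2 :=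
      (e2.isWeaklyRegular_congr rs2).mpr hrs2wr
    -- depth ≥ 1 for the kernel
    obtain ⟨rs1, hrs1len, hrs1m, hrs1wr⟩ := depList_of_moduleDepth 1 (by
      have := hdepth (j+1) (by omega)
      exact_mod_cast le_trans (by norm_num) this)
    obtain ⟨r1, rs1', rfl⟩ := List.exists_cons_of_ne_nil
      (by rintro rfl; simp at hrs1len : rs1 ≠ [])
    have hrs1nil : rs1' = [] := by
      simpa using hrs1len
    subst hrs1nil
    rw [isWeaklyRegular_singleton_iff] at hrs1wr
    have hr1ker : IsSMulRegular ↥(LinearMap.ker S.g.hom) r1 := hrs1wr.submodule _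
    -- apply the depth lemma to ker S.g → homology
    obtain ⟨ds, hdslen, hdsm, hdswr⟩ := dep_of_surjective 1
      ↥(LinearMap.ker S.g.hom) (↥(LinearMap.ker S.g.hom) ⧸ LinearMap.range S.moduleCatToCycles)
      (LinearMap.range S.moduleCatToCycles).mkQ (Submodule.mkQ_surjective _)
      ⟨rs2, hrs2len, hrs2m, by rw [Submodule.ker_mkQ]; exact hrs2wr'⟩
      ⟨[r1], rfl, by simpa using hrs1m, (isWeaklyRegular_singleton_iff _ _).mpr hr1ker⟩
    obtain ⟨d1, ds', rfl⟩ := List.exists_cons_of_ne_nil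
      (by rintro rfl; simp at hdslen : ds ≠ [])
    have hdsnil : ds' = [] := by simpa using hdslen
    subst hdsnil
    rw [isWeaklyRegular_singleton_iff] at hdswr
    -- transport to the categorical homology
    have efin : (C.homology (j+1) : Type u) ≃ₗ[A] S.moduleCatLeftHomologyData.H :=
      hiso.toLinearEquiv
    have hreg : IsSMulRegular (C.homology (j+1)) d1 :=
      (efin.isSMulRegular_congr d1).mpr hdswr
    have h1 : (1 : ℕ∞) ≤ moduleDepth A (C.homology (j+1)) :=
      one_le_moduleDepth (hdsm d1 (by simp)) hreg
    rw [hdep0] at h1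
    exact absurd h1 (by norm_num)
  -- conclude by descending induction
  have final : ∀ t i : ℕ, 1 ≤ i → h < i + t → Limits.IsZero (C.homology i) := by
    intro t
    induction t with
    | zero => intro i hi hh; exact hzero_homology i (by omega)
    | succ t ih =>
      intro i hi hh
      by_cases hc : h < i + t
      · exact ih i hi hc
      · exact main i hi (fun i' hi' => ih i' (by omega) (by omega))
  intro i hi
  exact final (h+1) i hi (by omega)
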